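/- arXiv:2004.06948 — 2 statements merged into one kernel-verified Lean document; each statement's English description precedes it below -/
import Mathlib

section
/- Let m be a finite Borel measure on [0,1] and let (P_k) be a sequence of partitions of [0,1] with mesh tending to 0, each with strictly positive m-mass on every partition interval. Let π_k be the conditional-averaging projection and E_k the piecewise-constant extension associated with P_k. Then for every u ∈ C([0,1]), ‖π_k u‖_{L²(m_k)} → ‖u‖_{L²(m)} as k → ∞, where m_k is the induced point measure on the partition points. -/
open MeasureTheory Set Filter

lemma aux_disj {N : ℕ} (b : Fin (N + 1) → ℝ) (h : Monotone b) :
    Pairwise (Function.onFun Disjoint fun i : Fin N => Set.Ico (b i.castSucc) (b i.succ)) := by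
  have key : ∀ i j : Fin N, i < j →
      Disjoint (Set.Ico (b i.castSucc) (b i.succ)) (Set.Ico (b j.castSucc) (b j.succ)) := by
    intro i j hij
    refine Set.Ico_disjoint_Ico.mpr ?_
    have h1 : b i.succ ≤ b j.castSucc := h (by
      simp only [Fin.le_def, Fin.val_succ, Fin.coe_castSucc]
      exact hij)
    calc min (b i.succ) (b j.succ) ≤ b i.succ := min_le_left _ _
      _ ≤ b j.castSucc := h1
      _ ≤ max (b i.castSucc) (b j.castSucc) := le_max_right _ _
  intro i j hij
  rcases lt_or_gt_of_ne hij with hlt | hlt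
  · exact key i j hlt
  · exact (key j i hlt).symm

lemma aux_union {N : ℕ} (b : Fin (N + 1) → ℝ) (h : StrictMono b) :
    (⋃ i : Fin N, Set.Ico (b i.castSucc) (b i.succ)) = Set.Ico (b 0) (b (Fin.last N)) := by
  classical
  ext x
  simp only [Set.mem_iUnion, Set.mem_Ico]
  constructor
  · rintro ⟨i, h1, h2⟩
    refine ⟨le_trans (h.monotone (Fin.zero_le _)) h1, lt_of_lt_of_le h2 ?_⟩
    exact h.monotone (by simp [Fin.le_def, Fin.val_succ, Fin.last])
  · rintro ⟨h0, hl⟩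
    set S : Finset (Fin (N + 1)) := Finset.univ.filter (fun j => b j ≤ x) with hS
    have hSne : S.Nonempty := ⟨0, by simp [hS, h0]⟩
    set j := S.max' hSne with hj
    have hjmem : j ∈ S := S.max'_mem hSne
    have hjle : b j ≤ x := by simpa [hS] using hjmem
    have hjlt : (j : ℕ) < N := by
      rcases lt_or_eq_of_le (Nat.lt_succ_iff.mp j.isLt) with h' | h'
      · exact h'
      · exfalso
        have : j = Fin.last N := by ext; simpa [Fin.last] using h'
        rw [this] at hjle
        exact absurd hjle (not_le.mpr hl)
    refine ⟨⟨(j : ℕ), hjlt⟩, ?_, ?_⟩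
    · simpa [Fin.castSucc] using hjle
    · by_contra hcon
      push_neg at hcon
      have hmem : (⟨(j : ℕ), hjlt⟩ : Fin N).succ ∈ S := by
        simp only [hS, Finset.mem_filter, Finset.mem_univ, true_and]
        exact hcon
      have := S.le_max' _ hmem
      rw [← hj] at this
      exact absurd this (by simp [Fin.lt_iff_val_lt_val, Fin.le_def])

/-- along a sequence of partitions with mesh tending to 0,
`‖π_k u‖_{L²(m_k)} → ‖u‖_{L²(m)}` for every continuous `u` on `[0,1]`. -/
theorem stmt_7 (m : Measure ℝ) [IsFiniteMeasure m] (hm1 : m {(1:ℝ)} = 0)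
    (n : ℕ → ℕ) (hn : ∀ k, 0 < n k)
    (a : ∀ k, Fin (n k + 1) → ℝ)
    (ha0 : ∀ k, a k 0 = 0) (ha1 : ∀ k, a k (Fin.last (n k)) = 1)
    (hamono : ∀ k, StrictMono (a k))
    (hpos : ∀ k (i : Fin (n k)), m (Set.Ico (a k i.castSucc) (a k i.succ)) ≠ 0)
    (hmesh : ∀ ε > (0:ℝ), ∃ K, ∀ k ≥ K, ∀ i : Fin (n k),
      a k i.succ - a k i.castSucc < ε)
    (u : ℝ → ℝ) (hu : ContinuousOn u (Set.Icc (0:ℝ) 1)) :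
    Tendsto
      (fun k => Real.sqrt (∑ i : Fin (n k),
        (m (Set.Ico (a k i.castSucc) (a k i.succ))).toReal *
          ((m (Set.Ico (a k i.castSucc) (a k i.succ))).toReal⁻¹ *
              ∫ x in Set.Ico (a k i.castSucc) (a k i.succ), u x ∂m) ^ 2))
      atTop
      (nhds (Real.sqrt (∫ x in Set.Icc (0:ℝ) 1, (u x) ^ 2 ∂m))) := by
  set L := ∫ x in Set.Icc (0:ℝ) 1, (u x) ^ 2 ∂m with hL
  set F := fun k => ∑ i : Fin (n k),
      (m (Set.Ico (a k i.castSucc) (a k i.succ))).toReal *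
        ((m (Set.Ico (a k i.castSucc) (a k i.succ))).toReal⁻¹ *
            ∫ x in Set.Ico (a k i.castSucc) (a k i.succ), u x ∂m) ^ 2 with hF
  have main : Tendsto F atTop (nhds L) := by
    rw [Metric.tendsto_atTop]
    intro ε hε
    obtain ⟨M, hM⟩ := isCompact_Icc.exists_bound_of_continuousOn hu
    have hM0 : 0 ≤ M := le_trans (norm_nonneg _) (hM 0 (by norm_num))
    set T := (m Set.univ).toReal + 1 with hT
    have hT0 : 0 < T := by positivity
    set εu := min 1 (ε / (2 * (2 * M + 1) * T)) with hεu
    have hεu0 : 0 < εu := lt_min one_pos (by positivity)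
    have hεu1 : εu ≤ 1 := min_le_left _ _
    have hεu2 : εu ≤ ε / (2 * (2 * M + 1) * T) := min_le_right _ _
    have hUC : UniformContinuousOn u (Set.Icc 0 1) :=
      isCompact_Icc.uniformContinuousOn_of_continuous hu
    obtain ⟨δ, hδ0, hδ⟩ := Metric.uniformContinuousOn_iff.mp hUC εu hεu0
    obtain ⟨K, hK⟩ := hmesh δ hδ0
    have hIntu : IntegrableOn u (Set.Icc (0:ℝ) 1) m :=
      hu.integrableOn_compact isCompact_Icc
    have hIntu2 : IntegrableOn (fun x => u x ^ 2) (Set.Icc (0:ℝ) 1) m :=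
      (hu.pow 2).integrableOn_compact isCompact_Icc
    refine ⟨K, fun k hk => ?_⟩
    set s : Fin (n k) → Set ℝ := fun i => Set.Ico (a k i.castSucc) (a k i.succ) with hs
    set c : Fin (n k) → ℝ := fun i => (m (s i)).toReal with hc
    have hsub : ∀ i, s i ⊆ Set.Icc (0:ℝ) 1 := by
      intro i x hx
      obtain ⟨h1, h2⟩ := hx
      constructor
      · calc (0:ℝ) = a k 0 := (ha0 k).symm
          _ ≤ a k i.castSucc := (hamono k).monotone (Fin.zero_le _)
          _ ≤ x := h1
      · calc x ≤ a k i.succ := le_of_lt h2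
          _ ≤ a k (Fin.last (n k)) := (hamono k).monotone (Fin.le_last _)
          _ = 1 := ha1 k
    have hfin : ∀ i, m (s i) ≠ ⊤ := fun i => measure_ne_top m _
    have hcpos : ∀ i, 0 < c i := fun i => ENNReal.toReal_pos (hpos k i) (hfin i)
    have hui : ∀ i, IntegrableOn u (s i) m := fun i => hIntu.mono_set (hsub i)
    have hui2 : ∀ i, IntegrableOn (fun x => u x ^ 2) (s i) m :=
      fun i => hIntu2.mono_set (hsub i)
    have hdisj := aux_disj (a k) (hamono k).monotone
    -- sum of integrals over pieces equals integral over Icc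
    have hsum_eq : ∑ i : Fin (n k), ∫ x in s i, u x ^ 2 ∂m = L := by
      rw [← integral_iUnion_fintype (fun i => measurableSet_Ico) hdisj hui2]
      rw [aux_union (a k) (hamono k), ha0 k, ha1 k]
      rw [hL]
      apply setIntegral_congr_set
      have h1 : Set.Icc (0:ℝ) 1 = Set.Ico (0:ℝ) 1 ∪ {1} :=
        (Set.Ico_union_right (by norm_num : (0:ℝ) ≤ 1)).symm
      rw [h1]
      refine (MeasureTheory.union_ae_eq_left_of_ae_eq_empty ?_).symm
      exact (ae_eq_empty).mpr hm1
    -- per-interval bound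
    have hterm : ∀ i : Fin (n k),
        |c i * ((c i)⁻¹ * ∫ x in s i, u x ∂m) ^ 2 - ∫ x in s i, u x ^ 2 ∂m|
          ≤ εu * (2 * M + 1) * c i := by
      intro i
      set A := (c i)⁻¹ * ∫ x in s i, u x ∂m with hA
      have hmesh_i : a k i.succ - a k i.castSucc < δ := hK k hk i
      have hpt : ∀ x ∈ s i, |A - u x| ≤ εu := by
        intro x hx
        have hb : |(∫ y in s i, u y ∂m) - c i * u x| ≤ εu * c i := by
          have heq : (∫ y in s i, u y ∂m) - c i * u x
              = ∫ y in s i, (u y - u x) ∂m := by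
            rw [integral_sub (hui i)
              ((integrableOn_const_iff).mpr (Or.inr (hfin i).lt_top))]
            rw [setIntegral_const, smul_eq_mul]
            rfl
          rw [heq]
          calc |∫ y in s i, (u y - u x) ∂m| = ‖∫ y in s i, (u y - u x) ∂m‖ := rfl
            _ ≤ εu * (m (s i)).toReal := by
                apply norm_setIntegral_le_of_norm_le_const (hfin i).lt_top
                intro y hy
                have hdist : dist y x < δ := by
                  rw [Real.dist_eq]
                  obtain ⟨hy1, hy2⟩ := hy
                  obtain ⟨hx1, hx2⟩ := hx
                  rw [abs_lt]
                  constructor <;> linarith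
                have := hδ y (hsub i hy) x (hsub i hx) hdist
                rw [Real.dist_eq] at this
                exact le_of_lt (by simpa [Real.norm_eq_abs] using this)
            _ = εu * c i := rfl
        have hc0 : c i ≠ 0 := ne_of_gt (hcpos i)
        have : A - u x = (c i)⁻¹ * ((∫ y in s i, u y ∂m) - c i * u x) := by
          rw [hA, mul_sub, ← mul_assoc, inv_mul_cancel₀ hc0, one_mul]
        rw [this, abs_mul, abs_inv, abs_of_pos (hcpos i)]
        rw [inv_mul_le_iff₀ (hcpos i)]
        calc |(∫ y in s i, u y ∂m) - c i * u x| ≤ εu * c i := hb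
          _ = c i * εu := mul_comm _ _
      -- bound the difference of squares pointwise
      have hptsq : ∀ x ∈ s i, |A ^ 2 - u x ^ 2| ≤ εu * (2 * M + 1) := by
        intro x hx
        have h1 := hpt x hx
        have h2 : |u x| ≤ M := by
          have := hM x (hsub i hx)
          simpa [Real.norm_eq_abs] using this
        have h3 : |A| ≤ M + 1 := by
          calc |A| = |(A - u x) + u x| := by ring_nf
            _ ≤ |A - u x| + |u x| := abs_add_le _ _
            _ ≤ εu + M := add_le_add h1 h2
            _ ≤ M + 1 := by linarith
        have h4 : A ^ 2 - u x ^ 2 = (A - u x) * (A + u x) := by ring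
        rw [h4, abs_mul]
        have h5 : |A + u x| ≤ 2 * M + 1 :=
          calc |A + u x| ≤ |A| + |u x| := abs_add_le _ _
            _ ≤ 2 * M + 1 := by linarith
        exact mul_le_mul h1 h5 (abs_nonneg _) (le_of_lt hεu0)
      have heq2 : c i * A ^ 2 - ∫ x in s i, u x ^ 2 ∂m
          = ∫ x in s i, (A ^ 2 - u x ^ 2) ∂m := by
        rw [integral_sub ((integrableOn_const_iff (C := A ^ 2)).mpr (Or.inr (hfin i).lt_top)) (hui2 i)]
        rw [setIntegral_const, smul_eq_mul]
        rfl
      rw [heq2]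
      have hnorm : ‖∫ x in s i, (A ^ 2 - u x ^ 2) ∂m‖
          ≤ εu * (2 * M + 1) * (m (s i)).toReal := by
        apply norm_setIntegral_le_of_norm_le_const (hfin i).lt_top
        intro x hx
        simpa [Real.norm_eq_abs] using hptsq x hx
      simpa [Real.norm_eq_abs] using hnorm
    -- sum up
    have hsumc : ∑ i : Fin (n k), c i ≤ (m Set.univ).toReal := by
      have h1 : ∑ i : Fin (n k), m (s i) = m (⋃ i, s i) := by
        rw [← measure_biUnion_finset (by
            intro i _ j _ hij; exact hdisj hij) (fun i _ => measurableSet_Ico)]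
        congr 1
        simp
        rfl
      have h2 : ∑ i : Fin (n k), c i = (∑ i : Fin (n k), m (s i)).toReal := by
        rw [ENNReal.toReal_sum (fun i _ => hfin i)]
      rw [h2, h1]
      exact ENNReal.toReal_mono (measure_ne_top m _) (measure_mono (Set.subset_univ _))
    have hFL : |F k - L| ≤ εu * (2 * M + 1) * (m Set.univ).toReal := by
      have hFk : F k = ∑ i : Fin (n k),
          (m (s i)).toReal * ((m (s i)).toReal⁻¹ * ∫ x in s i, u x ∂m) ^ 2 := rfl
      rw [hFk, ← hsum_eq, ← Finset.sum_sub_distrib]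
      calc |∑ i : Fin (n k), ((m (s i)).toReal *
              ((m (s i)).toReal⁻¹ * ∫ x in s i, u x ∂m) ^ 2 - ∫ x in s i, u x ^ 2 ∂m)|
          ≤ ∑ i : Fin (n k), |(m (s i)).toReal *
              ((m (s i)).toReal⁻¹ * ∫ x in s i, u x ∂m) ^ 2 - ∫ x in s i, u x ^ 2 ∂m| :=
            Finset.abs_sum_le_sum_abs _ _
        _ ≤ ∑ i : Fin (n k), εu * (2 * M + 1) * c i :=
            Finset.sum_le_sum (fun i _ => hterm i)
        _ = εu * (2 * M + 1) * ∑ i : Fin (n k), c i := by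
            rw [Finset.mul_sum]
        _ ≤ εu * (2 * M + 1) * (m Set.univ).toReal := by
            apply mul_le_mul_of_nonneg_left hsumc (by positivity)
    rw [Real.dist_eq]
    have h1 : (m Set.univ).toReal ≤ T := by rw [hT]; linarith
    have h2 : 0 ≤ (m Set.univ).toReal := ENNReal.toReal_nonneg
    have h3 : εu * (2 * M + 1) * T ≤ ε / 2 := by
      have hstep := mul_le_mul_of_nonneg_right hεu2
        (by positivity : (0:ℝ) ≤ (2 * M + 1) * T)
      calc εu * (2 * M + 1) * T = εu * ((2 * M + 1) * T) := by ring
        _ ≤ ε / (2 * (2 * M + 1) * T) * ((2 * M + 1) * T) := hstep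
        _ = ε / 2 := by field_simp
    have h4 := mul_le_mul_of_nonneg_left h1
      (by positivity : (0:ℝ) ≤ εu * (2 * M + 1))
    nlinarith [hFL]
  exact main.sqrt
end

section
/- Let s : [0,1] → ℝ be continuous and strictly increasing, fix a partition with points a_1 < ... < a_{n+1}, and let u_n be an s-linear interpolation function on [0,1] (s-affine on each partition interval) such that ∫_{[0,1]} (du_n/ds)² dμ_s ≤ M². Let φ_n be the restriction of u_n to the partition points, extended to a step function E_n φ_n(x) = φ_n(a_i) on [a_i, a_{i+1}). Then for all x ∈ [a_i, a_{i+1}], |u_n(x) − E_n φ_n(x)| ≤ M (s(x) − s(a_i))^{1/2}, and consequently for any φ ∈ L²([0,1], m) (m a finite Borel measure), |∫ φ (u_n − E_n φ_n) dm| ≤ M ‖φ‖_{L¹(m)} · (sup_i (s(a_{i+1}) − s(a_i)))^{1/2}. -/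
open MeasureTheory Set

private lemma find_interval {n : ℕ} (a : Fin (n + 1) → ℝ) (hamono : StrictMono a)
    {x : ℝ} (h0 : a 0 ≤ x) (h1 : x < a (Fin.last n)) :
    ∃ i : Fin n, a i.castSucc ≤ x ∧ x < a i.succ := by
  classical
  set T := Finset.univ.filter (fun j : Fin (n + 1) => a j ≤ x) with hT
  have hne : T.Nonempty := ⟨0, by simp [hT, h0]⟩
  set j := T.max' hne with hj
  have hjmem : j ∈ T := T.max'_mem hne
  have hjle : a j ≤ x := by simpa [hT] using hjmem
  have hjne : j ≠ Fin.last n := by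
    intro h
    rw [h] at hjle
    exact absurd hjle (not_le.mpr h1)
  have hjlt : (j : ℕ) < n := by
    have := Fin.le_last j
    rcases lt_or_eq_of_le this with h | h
    · exact_mod_cast h
    · exact absurd (Fin.ext (by exact_mod_cast congrArg Fin.val h)) hjne
  refine ⟨⟨(j : ℕ), hjlt⟩, ?_, ?_⟩
  · have : (⟨(j : ℕ), hjlt⟩ : Fin n).castSucc = j := by
      apply Fin.ext; simp
    rw [this]; exact hjle
  · by_contra h
    push_neg at h
    have hmem : (⟨(j : ℕ), hjlt⟩ : Fin n).succ ∈ T := by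
      rw [hT]
      simp only [Finset.mem_filter, Finset.mem_univ, true_and]
      exact h
    have hle := T.le_max' _ hmem
    rw [← hj] at hle
    have : ((⟨(j : ℕ), hjlt⟩ : Fin n).succ : Fin (n+1)).val ≤ (j : ℕ) := hle
    simp at this

/-- an s-affine function `un` with energy bound `∫ (dun/ds)² dμ_s ≤ M²`
differs from its step extension `Eφ` (piecewise constant value at the left partition
point) by at most `M √(s(x) − s(a_i))` on each partition interval; consequently the
pairing with any `φ ∈ L¹(m)` is bounded by `M ‖φ‖_{L¹} (sup_i Δs_i)^{1/2}`. -/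
theorem stmt_9 (s : StieltjesFunction ℝ) (hs : Continuous s)
    (hmono : StrictMonoOn s (Set.Icc (0:ℝ) 1))
    (n : ℕ) (hn : 0 < n) (a : Fin (n + 1) → ℝ)
    (ha0 : a 0 = 0) (halast : a (Fin.last n) = 1) (hamono : StrictMono a)
    (un g : ℝ → ℝ) (c : Fin n → ℝ) (M : ℝ) (hM : 0 ≤ M)
    -- un is s-affine with slope c i on the i-th interval, with s-derivative g
    (hun : ∀ i : Fin n, ∀ x ∈ Set.Icc (a i.castSucc) (a i.succ),
      un x = un (a i.castSucc) + c i * (s x - s (a i.castSucc)))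
    (hg : ∀ i : Fin n, ∀ x ∈ Set.Ioo (a i.castSucc) (a i.succ), g x = c i)
    (henergy : ∫ y in Set.Icc (0:ℝ) 1, (g y) ^ 2 ∂s.measure ≤ M ^ 2)
    -- Eφ is the step extension of the restriction of un to the partition points
    (Eφ : ℝ → ℝ)
    (hEφ : ∀ i : Fin n, ∀ x ∈ Set.Ico (a i.castSucc) (a i.succ), Eφ x = un (a i.castSucc))
    (m : Measure ℝ) [IsFiniteMeasure m] (hm1 : m {(1:ℝ)} = 0)
    (φ : ℝ → ℝ) (hφ : IntegrableOn φ (Set.Icc (0:ℝ) 1) m) :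
    (∀ i : Fin n, ∀ x ∈ Set.Icc (a i.castSucc) (a i.succ),
      |un x - un (a i.castSucc)| ≤ M * Real.sqrt (s x - s (a i.castSucc))) ∧
    |∫ x in Set.Icc (0:ℝ) 1, φ x * (un x - Eφ x) ∂m| ≤
      M * (∫ x in Set.Icc (0:ℝ) 1, |φ x| ∂m) *
        Real.sqrt (Finset.univ.sup'
          (Finset.univ_nonempty_iff.mpr ⟨⟨0, hn⟩⟩)
          (fun i : Fin n => s (a i.succ) - s (a i.castSucc))) := by
  classical
  have hamon : Monotone a := hamono.monotone
  have haIcc : ∀ j : Fin (n + 1), a j ∈ Icc (0:ℝ) 1 := fun j =>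
    ⟨ha0 ▸ hamon (Fin.zero_le j), halast ▸ hamon (Fin.le_last j)⟩
  -- leftLim of s equals s by continuity
  have hleft : ∀ x : ℝ, Function.leftLim s x = x |> fun _ => True := fun _ => trivial
  have hleft' : ∀ x : ℝ, Function.leftLim (s : ℝ → ℝ) x = s x := by
    intro x
    exact leftLim_eq_of_tendsto
      (hs.continuousAt.continuousWithinAt)
  have hpt : ∀ x : ℝ, s.measure {x} = 0 := by
    intro x
    rw [s.measure_singleton, hleft', sub_self, ENNReal.ofReal_zero]
  have hIooIcc : ∀ i : Fin n, Ioo (a i.castSucc) (a i.succ) ⊆ Icc (0:ℝ) 1 := fun i =>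
    Ioo_subset_Icc_self.trans (Icc_subset_Icc (haIcc _).1 (haIcc _).2)
  -- the step function G equal a.e. to g²
  set G : ℝ → ℝ := fun x =>
    ∑ i : Fin n, (Ioo (a i.castSucc) (a i.succ)).indicator (fun _ => (c i) ^ 2) x with hG
  -- intervals are pairwise disjoint in the needed sense
  have hdisj : ∀ (i j : Fin n) (x : ℝ), x ∈ Ioo (a i.castSucc) (a i.succ) →
      x ∈ Ioo (a j.castSucc) (a j.succ) → i = j := by
    intro i j x hxi hxj
    by_contra hij
    rcases lt_or_gt_of_ne hij with h | h
    · have : i.succ ≤ j.castSucc := by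
        rw [Fin.le_def, Fin.val_succ, Fin.coe_castSucc]; exact Fin.lt_def.mp h
      exact absurd (hxi.2.trans_le ((hamon this).trans hxj.1.le)) (lt_irrefl x)
    · have : j.succ ≤ i.castSucc := by
        rw [Fin.le_def, Fin.val_succ, Fin.coe_castSucc]; exact Fin.lt_def.mp h
      exact absurd (hxj.2.trans_le ((hamon this).trans hxi.1.le)) (lt_irrefl x)
  have hrange : s.measure (Set.range a) = 0 := by
    have : Set.range a = ⋃ j : Fin (n+1), {a j} := by
      ext y; simp [Set.range]
    rw [this]
    exact le_antisymm ((measure_iUnion_le _).trans (by simp [hpt])) (zero_le)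
  -- a.e. equality of g² and G on Icc 0 1
  have haeeq : (fun y => g y ^ 2) =ᵐ[s.measure.restrict (Icc (0:ℝ) 1)] G := by
    have h1 : ∀ᵐ x ∂s.measure.restrict (Icc (0:ℝ) 1), x ∈ Icc (0:ℝ) 1 :=
      ae_restrict_mem measurableSet_Icc
    have h2 : ∀ᵐ x ∂s.measure.restrict (Icc (0:ℝ) 1), x ∉ Set.range a := by
      refine Filter.Eventually.filter_mono (ae_mono Measure.restrict_le_self) ?_
      exact measure_eq_zero_iff_ae_notMem.mp hrange
    filter_upwards [h1, h2] with x hx hxr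
    have hx1 : x < a (Fin.last n) := by
      rw [halast]
      exact lt_of_le_of_ne hx.2 (fun h => hxr ⟨Fin.last n, by rw [halast, h]⟩)
    obtain ⟨i, hi1, hi2⟩ := find_interval a hamono (by rw [ha0]; exact hx.1) hx1
    have hi1' : a i.castSucc < x := lt_of_le_of_ne hi1 (fun h => hxr ⟨i.castSucc, h⟩)
    have hxIoo : x ∈ Ioo (a i.castSucc) (a i.succ) := ⟨hi1', hi2⟩
    have hGx : G x = (c i) ^ 2 := by
      show ∑ j : Fin n, (Ioo (a j.castSucc) (a j.succ)).indicator (fun _ => (c j) ^ 2) x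
        = (c i) ^ 2
      rw [Finset.sum_eq_single i]
      · exact Set.indicator_of_mem hxIoo _
      · intro j _ hji
        exact Set.indicator_of_notMem (fun hxj => hji (hdisj j i x hxj hxIoo)) _
      · simp
    show g x ^ 2 = G x
    rw [hGx, hg i x hxIoo]
  haveI hfin : Fact (s.measure (Icc (0:ℝ) 1) < ⊤) :=
    ⟨by rw [s.measure_Icc]; exact ENNReal.ofReal_lt_top⟩
  have hGint : Integrable G (s.measure.restrict (Icc (0:ℝ) 1)) := by
    apply integrable_finset_sum
    intro i _
    exact (integrable_const _).indicator measurableSet_Ioo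
  have hg2int : IntegrableOn (fun y => g y ^ 2) (Icc (0:ℝ) 1) s.measure :=
    hGint.congr haeeq.symm
  -- energy on each interval
  have key : ∀ i : Fin n, (c i) ^ 2 * (s (a i.succ) - s (a i.castSucc)) ≤ M ^ 2 := by
    intro i
    have hsle : s (a i.castSucc) ≤ s (a i.succ) := s.mono (hamon (Fin.castSucc_le_succ i))
    have hIoo : ∫ y in Ioo (a i.castSucc) (a i.succ), g y ^ 2 ∂s.measure
        = (c i) ^ 2 * (s (a i.succ) - s (a i.castSucc)) := by
      rw [setIntegral_congr_fun measurableSet_Ioo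
        (fun x hx => by show g x ^ 2 = (c i) ^ 2; rw [hg i x hx] :
          EqOn (fun y => g y ^ 2) (fun _ => (c i)^2)
          (Ioo (a i.castSucc) (a i.succ)))]
      rw [setIntegral_const, measureReal_def, s.measure_Ioo, hleft', smul_eq_mul,
        ENNReal.toReal_ofReal (by linarith), mul_comm]
    have hmonoset : ∫ y in Ioo (a i.castSucc) (a i.succ), g y ^ 2 ∂s.measure
        ≤ ∫ y in Icc (0:ℝ) 1, g y ^ 2 ∂s.measure :=
      setIntegral_mono_set hg2int (Filter.Eventually.of_forall fun y => sq_nonneg _)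
        ((hIooIcc i).eventuallyLE)
    linarith [hIoo ▸ hmonoset]
  -- Part A
  have partA : ∀ i : Fin n, ∀ x ∈ Set.Icc (a i.castSucc) (a i.succ),
      |un x - un (a i.castSucc)| ≤ M * Real.sqrt (s x - s (a i.castSucc)) := by
    intro i x hx
    rw [hun i x hx]
    have ht0 : 0 ≤ s x - s (a i.castSucc) := by linarith [s.mono hx.1]
    have htle : s x - s (a i.castSucc) ≤ s (a i.succ) - s (a i.castSucc) := by
      linarith [s.mono hx.2]
    set t := s x - s (a i.castSucc) with htdef
    have h1 : (c i) ^ 2 * t ≤ M ^ 2 :=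
      le_trans (mul_le_mul_of_nonneg_left htle (sq_nonneg _)) (key i)
    have h2 : Real.sqrt ((c i) ^ 2 * t) ≤ M := by
      calc Real.sqrt ((c i) ^ 2 * t) ≤ Real.sqrt (M ^ 2) := Real.sqrt_le_sqrt h1
        _ = M := Real.sqrt_sq hM
    have h3 : |c i| * t = Real.sqrt ((c i) ^ 2 * t) * Real.sqrt t := by
      rw [Real.sqrt_mul (sq_nonneg _), Real.sqrt_sq_eq_abs, mul_assoc,
        Real.mul_self_sqrt ht0]
    calc |un (a i.castSucc) + c i * t - un (a i.castSucc)|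
        = |c i| * t := by rw [add_sub_cancel_left, abs_mul, abs_of_nonneg ht0]
      _ = Real.sqrt ((c i) ^ 2 * t) * Real.sqrt t := h3
      _ ≤ M * Real.sqrt t := mul_le_mul_of_nonneg_right h2 (Real.sqrt_nonneg _)
  refine ⟨partA, ?_⟩
  -- Part B
  set K := Finset.univ.sup' (Finset.univ_nonempty_iff.mpr ⟨⟨0, hn⟩⟩)
    (fun i : Fin n => s (a i.succ) - s (a i.castSucc)) with hKdef
  have hKle : ∀ i : Fin n, s (a i.succ) - s (a i.castSucc) ≤ K := fun i =>
    Finset.le_sup' (fun i : Fin n => s (a i.succ) - s (a i.castSucc)) (Finset.mem_univ i)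
  have hae : ∀ᵐ x ∂m.restrict (Icc (0:ℝ) 1),
      ‖φ x * (un x - Eφ x)‖ ≤ |φ x| * (M * Real.sqrt K) := by
    have h1 : ∀ᵐ x ∂m.restrict (Icc (0:ℝ) 1), x ∈ Icc (0:ℝ) 1 :=
      ae_restrict_mem measurableSet_Icc
    have h2 : ∀ᵐ x ∂m.restrict (Icc (0:ℝ) 1), x ≠ 1 := by
      refine Filter.Eventually.filter_mono (ae_mono Measure.restrict_le_self) ?_
      simpa using measure_eq_zero_iff_ae_notMem.mp hm1
    filter_upwards [h1, h2] with x hx hx1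
    have hxlt : x < a (Fin.last n) := by
      rw [halast]; exact lt_of_le_of_ne hx.2 hx1
    obtain ⟨i, hi1, hi2⟩ := find_interval a hamono (by rw [ha0]; exact hx.1) hxlt
    have hEx : Eφ x = un (a i.castSucc) := hEφ i x ⟨hi1, hi2⟩
    have hbound := partA i x ⟨hi1, hi2.le⟩
    have hchain : M * Real.sqrt (s x - s (a i.castSucc)) ≤ M * Real.sqrt K := by
      apply mul_le_mul_of_nonneg_left _ hM
      apply Real.sqrt_le_sqrt
      have := s.mono hi2.le
      linarith [hKle i]
    rw [Real.norm_eq_abs, abs_mul, hEx]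
    exact mul_le_mul_of_nonneg_left (hbound.trans hchain) (abs_nonneg _)
  have hint : Integrable (fun x => |φ x| * (M * Real.sqrt K))
      (m.restrict (Icc (0:ℝ) 1)) := hφ.abs.mul_const _
  have := norm_integral_le_of_norm_le hint hae
  rw [Real.norm_eq_abs] at this
  rw [integral_mul_const] at this
  calc |∫ x in Icc (0:ℝ) 1, φ x * (un x - Eφ x) ∂m|
      ≤ (∫ x in Icc (0:ℝ) 1, |φ x| ∂m) * (M * Real.sqrt K) := this
    _ = M * (∫ x in Icc (0:ℝ) 1, |φ x| ∂m) * Real.sqrt K := by ring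
end
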